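/- Let α, β ∈ (−1, 1), let E be a nonnegative integrable function on [0,1], let J be a nonnegative measurable function on [0,1] with ∫₀^1 J(θ)² (1−θ)^α θ^β dθ < ∞, and let L > 0 satisfy E(θ) ≤ J(θ) + L ∫₀^θ E(η) dη for all θ ∈ [0,1]. Then there exists a constant C > 0, depending only on L, α, β, such that (∫₀^1 E(θ)² (1−θ)^α θ^β dθ)^{1/2} ≤ C (∫₀^1 J(θ)² (1−θ)^α θ^β dθ)^{1/2}. -/

import Mathlib

open MeasureTheory Set
open scoped ENNReal NNReal


lemma rpow_le_half_aux {x a : ℝ} (hx : 1/2 ≤ x) (hx1 : x ≤ 1) : x ^ a ≤ (1/2:ℝ) ^ a + 1 := by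
  rcases le_or_gt 0 a with h|h
  · have h1 : x ^ a ≤ 1 := Real.rpow_le_one (by linarith) hx1 h
    have h2 : (0:ℝ) ≤ (1/2:ℝ)^a := Real.rpow_nonneg (by norm_num) a
    linarith
  · have h1 : x ^ a ≤ (1/2:ℝ)^a := Real.rpow_le_rpow_of_nonpos (by norm_num) hx h.le
    linarith

lemma integrableOn_weight {a b : ℝ} (ha : -1 < a) (hb : -1 < b) :
    IntegrableOn (fun θ : ℝ => (1 - θ) ^ a * θ ^ b) (Ioo 0 1) := by
  have hmeas : Measurable (fun θ : ℝ => (1 - θ) ^ a * θ ^ b) := by fun_prop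
  have h1 : IntegrableOn (fun θ : ℝ => (1 - θ) ^ a * θ ^ b) (Ioc 0 (1/2)) := by
    have hb' : IntegrableOn (fun θ : ℝ => θ ^ b) (Ioc 0 (1/2)) := by
      have := intervalIntegral.intervalIntegrable_rpow' (a := (0:ℝ)) (b := 1/2) hb
      rwa [intervalIntegrable_iff, uIoc_of_le (by norm_num : (0:ℝ) ≤ 1/2)] at this
    refine Integrable.mono' (hb'.const_mul ((1/2:ℝ)^a + 1)) hmeas.aestronglyMeasurable.restrict ?_
    rw [ae_restrict_iff' measurableSet_Ioc]
    refine ae_of_all _ (fun θ hθ => ?_)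
    have hθ1 : (0:ℝ) < θ := hθ.1
    have hθ2 : θ ≤ 1/2 := hθ.2
    have h1θ : (1:ℝ)/2 ≤ 1 - θ := by linarith
    have h1θ' : 1 - θ ≤ 1 := by linarith
    have e1 : (1-θ)^a ≤ (1/2:ℝ)^a + 1 := rpow_le_half_aux h1θ h1θ'
    have e0 : (0:ℝ) ≤ θ ^ b := Real.rpow_nonneg hθ1.le b
    have e2 : (0:ℝ) ≤ (1-θ)^a := Real.rpow_nonneg (by linarith) a
    rw [Real.norm_eq_abs, abs_of_nonneg (mul_nonneg e2 e0)]
    exact mul_le_mul_of_nonneg_right e1 e0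
  have h2 : IntegrableOn (fun θ : ℝ => (1 - θ) ^ a * θ ^ b) (Ioc (1/2) 1) := by
    have ha' : IntegrableOn (fun θ : ℝ => (1 - θ) ^ a) (Ioc (1/2) 1) := by
      have h0 := intervalIntegral.intervalIntegrable_rpow' (a := (0:ℝ)) (b := 1/2) ha
      have := h0.comp_sub_left 1
      rw [show (1:ℝ)-0 = 1 by norm_num, show (1:ℝ)-1/2 = 1/2 by norm_num] at this
      rwa [intervalIntegrable_iff, uIoc_comm, uIoc_of_le (by norm_num : (1:ℝ)/2 ≤ 1)] at this
    refine Integrable.mono' (ha'.const_mul ((1/2:ℝ)^b + 1)) hmeas.aestronglyMeasurable.restrict ?_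
    rw [ae_restrict_iff' measurableSet_Ioc]
    refine ae_of_all _ (fun θ hθ => ?_)
    have hθ1 : (1:ℝ)/2 < θ := hθ.1
    have hθ2 : θ ≤ 1 := hθ.2
    have e1 : θ^b ≤ (1/2:ℝ)^b + 1 := rpow_le_half_aux hθ1.le hθ2
    have e2 : (0:ℝ) ≤ (1-θ)^a := Real.rpow_nonneg (by linarith) a
    have e0 : (0:ℝ) ≤ θ ^ b := Real.rpow_nonneg (by linarith) b
    rw [Real.norm_eq_abs, abs_of_nonneg (mul_nonneg e2 e0)]
    calc (1-θ)^a * θ^b ≤ (1-θ)^a * ((1/2:ℝ)^b + 1) := mul_le_mul_of_nonneg_left e1 e2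
      _ = ((1/2:ℝ)^b + 1) * (1-θ)^a := by ring
  have : IntegrableOn (fun θ : ℝ => (1 - θ) ^ a * θ ^ b) (Ioc 0 (1/2) ∪ Ioc (1/2) 1) :=
    h1.union h2
  refine this.mono_set ?_
  intro x hx
  rcases le_or_gt x (1/2) with h|h
  · exact Or.inl ⟨hx.1, h⟩
  · exact Or.inr ⟨h, hx.2.le⟩


lemma gronwall_primitive_bound (E J : ℝ → ℝ) (L : ℝ) (hL : 0 < L)
    (hE : IntegrableOn E (Icc 0 1)) (hE0 : ∀ θ ∈ Icc (0:ℝ) 1, 0 ≤ E θ)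
    (hJ : IntegrableOn J (Icc 0 1)) (hJ0 : ∀ θ ∈ Icc (0:ℝ) 1, 0 ≤ J θ)
    (hEJ : ∀ θ ∈ Icc (0:ℝ) 1, E θ ≤ J θ + L * ∫ η in (0:ℝ)..θ, E η) :
    ∀ θ ∈ Icc (0:ℝ) 1, (∫ η in (0:ℝ)..θ, E η)
      ≤ (3:ℝ)^(⌈2*L⌉₊) * ∫ η in (0:ℝ)..1, J η := by
  set F : ℝ → ℝ := fun θ => ∫ η in (0:ℝ)..θ, E η with hF
  set B : ℝ := ∫ η in (0:ℝ)..1, J η with hBdef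
  have hEint : ∀ a b : ℝ, 0 ≤ a → a ≤ b → b ≤ 1 → IntervalIntegrable E volume a b := by
    intro a b h0 hab h1
    rw [intervalIntegrable_iff, uIoc_of_le hab]
    exact hE.mono_set (fun x hx => ⟨by linarith [hx.1], by linarith [hx.2]⟩)
  have hJint : ∀ a b : ℝ, 0 ≤ a → a ≤ b → b ≤ 1 → IntervalIntegrable J volume a b := by
    intro a b h0 hab h1
    rw [intervalIntegrable_iff, uIoc_of_le hab]
    exact hJ.mono_set (fun x hx => ⟨by linarith [hx.1], by linarith [hx.2]⟩)
  have Fsplit : ∀ a b : ℝ, 0 ≤ a → a ≤ b → b ≤ 1 → F b = F a + ∫ η in a..b, E η := by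
    intro a b h0 hab h1
    simp only [hF]
    rw [← intervalIntegral.integral_add_adjacent_intervals (hEint 0 a le_rfl h0 (by linarith))
      (hEint a b h0 hab h1)]
  have Fmono : ∀ a b : ℝ, 0 ≤ a → a ≤ b → b ≤ 1 → F a ≤ F b := by
    intro a b h0 hab h1
    rw [Fsplit a b h0 hab h1]
    have : (0:ℝ) ≤ ∫ η in a..b, E η :=
      intervalIntegral.integral_nonneg hab
        (fun u hu => hE0 u ⟨by linarith [hu.1], by linarith [hu.2]⟩)
    linarith
  have F0 : F 0 = 0 := intervalIntegral.integral_same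
  have hB0 : 0 ≤ B :=
    intervalIntegral.integral_nonneg (by norm_num) (fun u hu => hJ0 u hu)
  have hJsub : ∀ a b : ℝ, 0 ≤ a → a ≤ b → b ≤ 1 → (∫ η in a..b, J η) ≤ B := by
    intro a b h0 hab h1
    have e1 : (0:ℝ) ≤ ∫ η in (0:ℝ)..a, J η :=
      intervalIntegral.integral_nonneg h0
        (fun u hu => hJ0 u ⟨hu.1, by linarith [hu.2]⟩)
    have e2 : (0:ℝ) ≤ ∫ η in b..1, J η :=
      intervalIntegral.integral_nonneg h1
        (fun u hu => hJ0 u ⟨by linarith [hu.1], hu.2⟩)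
    have s1 := intervalIntegral.integral_add_adjacent_intervals
      (hJint 0 a le_rfl h0 (by linarith)) (hJint a b h0 hab h1)
    have s2 := intervalIntegral.integral_add_adjacent_intervals
      ((hJint 0 a le_rfl h0 (by linarith)).trans (hJint a b h0 hab h1))
      (hJint b 1 (by linarith) h1 le_rfl)
    rw [hBdef, ← s2, ← s1]
    linarith
  set n : ℕ := ⌈2*L⌉₊ with hndef
  have hn0 : 0 < n := Nat.ceil_pos.mpr (by linarith)
  have hnL : 2*L ≤ (n:ℝ) := Nat.le_ceil _
  have hnpos : (0:ℝ) < n := Nat.cast_pos.mpr hn0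
  have key : ∀ k : ℕ, k ≤ n → F ((k:ℝ)/n) ≤ ((3:ℝ)^k - 1) * B := by
    intro k
    induction k with
    | zero => intro _; simp [F0]
    | succ k ih =>
      intro hkn
      have hk : k ≤ n := Nat.le_of_succ_le hkn
      have ihk := ih hk
      set a : ℝ := (k:ℝ)/n with hadef
      set b : ℝ := ((k:ℝ)+1)/n with hbdef
      have hcast : ((k+1 : ℕ):ℝ) = (k:ℝ) + 1 := by push_cast; ring
      have ha0 : 0 ≤ a := by positivity
      have hab : a ≤ b := by
        rw [hadef, hbdef]
        gcongr
        linarith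
      have hb1 : b ≤ 1 := by
        rw [hbdef, div_le_one hnpos]
        have : ((k:ℝ)+1) ≤ (n:ℝ) := by exact_mod_cast hkn
        linarith
      have hb0 : 0 ≤ b := le_trans ha0 hab
      have hFb0 : 0 ≤ F b := by
        have := Fmono 0 b le_rfl hb0 hb1
        rw [F0] at this; exact this
      have hba : b - a = 1/(n:ℝ) := by
        rw [hadef, hbdef]; field_simp; ring
      -- pointwise bound on [a,b]
      have hmain : (∫ η in a..b, E η) ≤ (∫ η in a..b, (J η + L * F b)) := by
        apply intervalIntegral.integral_mono_on hab (hEint a b ha0 hab hb1)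
          ((hJint a b ha0 hab hb1).add intervalIntegrable_const)
        intro θ hθ
        have hθI : θ ∈ Icc (0:ℝ) 1 := ⟨by linarith [hθ.1], by linarith [hθ.2]⟩
        have h1 := hEJ θ hθI
        have h2 : F θ ≤ F b := Fmono θ b hθI.1 hθ.2 hb1
        have : L * F θ ≤ L * F b := mul_le_mul_of_nonneg_left h2 hL.le
        calc E θ ≤ J θ + L * F θ := h1
          _ ≤ J θ + L * F b := by linarith
      have hsum : (∫ η in a..b, (J η + L * F b))
          = (∫ η in a..b, J η) + (b - a) * (L * F b) := by
        rw [intervalIntegral.integral_add (hJint a b ha0 hab hb1) intervalIntegrable_const,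
          intervalIntegral.integral_const, smul_eq_mul]
      have hhalf : (b - a) * (L * F b) ≤ (1/2) * F b := by
        rw [hba]
        have h1 : L / n ≤ 1/2 := by
          rw [div_le_div_iff₀ hnpos (by norm_num)]
          linarith
        have : (1/(n:ℝ)) * (L * F b) = (L / n) * F b := by ring
        rw [this]
        exact mul_le_mul_of_nonneg_right h1 hFb0
      have hstep : F b ≤ F a + B + (1/2) * F b := by
        have := Fsplit a b ha0 hab hb1
        have hJb := hJsub a b ha0 hab hb1
        linarith [hmain, hsum]
      have h3k : (1:ℝ) ≤ (3:ℝ)^k := one_le_pow₀ (by norm_num : (1:ℝ) ≤ 3)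
      have goal' : F b ≤ ((3:ℝ)^(k+1) - 1) * B := by
        have e : ((3:ℝ)^(k+1) - 1) = 3 * (3:ℝ)^k - 1 := by ring
        rw [e]
        nlinarith [hstep, ihk, hB0]
      have : ((k+1 : ℕ):ℝ)/n = b := by rw [hbdef, hcast]
      rw [this]
      exact goal'
  intro θ hθ
  have h1 : F θ ≤ F 1 := Fmono θ 1 hθ.1 hθ.2 le_rfl
  have h2 : ((n:ℝ))/n = 1 := div_self (ne_of_gt hnpos)
  have h3 := key n le_rfl
  rw [h2] at h3
  calc F θ ≤ F 1 := h1
    _ ≤ ((3:ℝ)^n - 1) * B := h3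
    _ ≤ (3:ℝ)^n * B := by nlinarith [hB0]


lemma holder_J (α β : ℝ) (J : ℝ → ℝ) (hJm : Measurable J)
    (hJ0 : ∀ θ ∈ Icc (0:ℝ) 1, 0 ≤ J θ) :
    (∫⁻ θ in Ioo (0:ℝ) 1, ENNReal.ofReal (J θ)) ≤
      (∫⁻ θ in Ioo (0:ℝ) 1, ENNReal.ofReal (J θ ^ 2 * (1 - θ) ^ α * θ ^ β)) ^ ((1:ℝ)/2)
      * (∫⁻ θ in Ioo (0:ℝ) 1, ENNReal.ofReal ((1 - θ) ^ (-α) * θ ^ (-β))) ^ ((1:ℝ)/2) := by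
  set f : ℝ → ℝ≥0∞ := fun θ => ENNReal.ofReal (J θ * ((1-θ)^(α/2) * θ^(β/2))) with hfdef
  set g : ℝ → ℝ≥0∞ := fun θ => ENNReal.ofReal ((1-θ)^(-(α/2)) * θ^(-(β/2))) with hgdef
  have hfm : Measurable f := by
    apply Measurable.ennreal_ofReal; fun_prop
  have hgm : Measurable g := by
    apply Measurable.ennreal_ofReal; fun_prop
  have hconj : Real.HolderConjugate 2 2 := Real.HolderConjugate.two_two
  have H := ENNReal.lintegral_mul_le_Lp_mul_Lq (volume.restrict (Ioo (0:ℝ) 1)) hconj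
    hfm.aemeasurable hgm.aemeasurable
  have e1 : (∫⁻ θ in Ioo (0:ℝ) 1, (f * g) θ) = ∫⁻ θ in Ioo (0:ℝ) 1, ENNReal.ofReal (J θ) := by
    apply setLIntegral_congr_fun measurableSet_Ioo
    intro θ hθ
    have hu : (0:ℝ) < 1 - θ := by linarith [hθ.2]
    have hv : (0:ℝ) < θ := hθ.1
    have hJθ : 0 ≤ J θ := hJ0 θ ⟨hv.le, by linarith [hθ.2]⟩
    have hw : (0:ℝ) ≤ J θ * ((1-θ)^(α/2) * θ^(β/2)) := by positivity
    have eu : (1-θ)^(α/2) * (1-θ)^(-(α/2)) = 1 := by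
      rw [← Real.rpow_add hu]; simp
    have ev : θ^(β/2) * θ^(-(β/2)) = 1 := by
      rw [← Real.rpow_add hv]; simp
    show f θ * g θ = ENNReal.ofReal (J θ)
    rw [hfdef, hgdef, ← ENNReal.ofReal_mul hw]
    congr 1
    calc J θ * ((1-θ)^(α/2) * θ^(β/2)) * ((1-θ)^(-(α/2)) * θ^(-(β/2)))
        = J θ * (((1-θ)^(α/2) * (1-θ)^(-(α/2))) * (θ^(β/2) * θ^(-(β/2)))) := by ring
      _ = J θ := by rw [eu, ev]; ring
  have e2 : (∫⁻ θ in Ioo (0:ℝ) 1, f θ ^ (2:ℝ))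
      = ∫⁻ θ in Ioo (0:ℝ) 1, ENNReal.ofReal (J θ ^ 2 * (1 - θ) ^ α * θ ^ β) := by
    apply setLIntegral_congr_fun measurableSet_Ioo
    intro θ hθ
    have hu : (0:ℝ) < 1 - θ := by linarith [hθ.2]
    have hv : (0:ℝ) < θ := hθ.1
    have hJθ : 0 ≤ J θ := hJ0 θ ⟨hv.le, by linarith [hθ.2]⟩
    have hw : (0:ℝ) ≤ J θ * ((1-θ)^(α/2) * θ^(β/2)) := by positivity
    have hu2 : ((1-θ)^(α/2))^2 = (1-θ)^α := by
      rw [← Real.rpow_natCast ((1-θ)^(α/2)) 2, ← Real.rpow_mul hu.le]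
      norm_num
    have hv2 : (θ^(β/2))^2 = θ^β := by
      rw [← Real.rpow_natCast (θ^(β/2)) 2, ← Real.rpow_mul hv.le]
      norm_num
    show f θ ^ (2:ℝ) = _
    rw [hfdef, ENNReal.ofReal_rpow_of_nonneg hw (by norm_num), Real.rpow_two]
    congr 1
    calc (J θ * ((1-θ)^(α/2) * θ^(β/2)))^2
        = J θ^2 * (((1-θ)^(α/2))^2 * (θ^(β/2))^2) := by ring
      _ = J θ ^ 2 * (1 - θ) ^ α * θ ^ β := by rw [hu2, hv2]; ring
  have e3 : (∫⁻ θ in Ioo (0:ℝ) 1, g θ ^ (2:ℝ))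
      = ∫⁻ θ in Ioo (0:ℝ) 1, ENNReal.ofReal ((1 - θ) ^ (-α) * θ ^ (-β)) := by
    apply setLIntegral_congr_fun measurableSet_Ioo
    intro θ hθ
    have hu : (0:ℝ) < 1 - θ := by linarith [hθ.2]
    have hv : (0:ℝ) < θ := hθ.1
    have hw : (0:ℝ) ≤ (1-θ)^(-(α/2)) * θ^(-(β/2)) := by positivity
    have hu2 : ((1-θ)^(-(α/2)))^2 = (1-θ)^(-α) := by
      rw [← Real.rpow_natCast ((1-θ)^(-(α/2))) 2, ← Real.rpow_mul hu.le]
      norm_num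
    have hv2 : (θ^(-(β/2)))^2 = θ^(-β) := by
      rw [← Real.rpow_natCast (θ^(-(β/2))) 2, ← Real.rpow_mul hv.le]
      norm_num
    show g θ ^ (2:ℝ) = _
    rw [hgdef, ENNReal.ofReal_rpow_of_nonneg hw (by norm_num), Real.rpow_two]
    congr 1
    calc ((1-θ)^(-(α/2)) * θ^(-(β/2)))^2
        = ((1-θ)^(-(α/2)))^2 * (θ^(-(β/2)))^2 := by ring
      _ = (1 - θ) ^ (-α) * θ ^ (-β) := by rw [hu2, hv2]
  rw [e1, e2, e3] at H
  simpa using H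

lemma integrableOn_of_lintegral_lt_top {J : ℝ → ℝ} (hJm : Measurable J)
    (hJ0 : ∀ θ ∈ Icc (0:ℝ) 1, 0 ≤ J θ)
    (hT : (∫⁻ θ in Ioo (0:ℝ) 1, ENNReal.ofReal (J θ)) < ⊤) :
    IntegrableOn J (Icc (0:ℝ) 1) := by
  refine ⟨hJm.aestronglyMeasurable, ?_⟩
  rw [HasFiniteIntegral, ← Measure.restrict_congr_set Ioo_ae_eq_Icc]
  have : (∫⁻ θ in Ioo (0:ℝ) 1, ‖J θ‖ₑ)
      = ∫⁻ θ in Ioo (0:ℝ) 1, ENNReal.ofReal (J θ) := by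
    apply setLIntegral_congr_fun measurableSet_Ioo
    intro θ hθ
    have hJθ : 0 ≤ J θ := hJ0 θ ⟨hθ.1.le, hθ.2.le⟩
    show ‖J θ‖ₑ = ENNReal.ofReal (J θ)
    rw [← ofReal_norm, Real.norm_of_nonneg hJθ]
  rw [this]
  exact hT

lemma lintegral_weight_lt_top {a b : ℝ} (ha : -1 < a) (hb : -1 < b) :
    (∫⁻ θ in Ioo (0:ℝ) 1, ENNReal.ofReal ((1-θ)^a * θ^b)) < ⊤ := by
  have h := (integrableOn_weight ha hb).hasFiniteIntegral
  rw [HasFiniteIntegral] at h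
  refine lt_of_le_of_lt (lintegral_mono fun θ => ?_) h
  rw [← ofReal_norm]
  exact ENNReal.ofReal_le_ofReal (le_abs_self _)

theorem weightedL2_bound_of_gronwall (α β : ℝ)
    (hα : α ∈ Ioo (-1:ℝ) 1) (hβ : β ∈ Ioo (-1:ℝ) 1) (L : ℝ) (hL : 0 < L) :
    ∃ C > (0:ℝ), ∀ E J : ℝ → ℝ,
      IntegrableOn E (Icc (0:ℝ) 1) → (∀ θ ∈ Icc (0:ℝ) 1, 0 ≤ E θ) →
      Measurable J → (∀ θ ∈ Icc (0:ℝ) 1, 0 ≤ J θ) →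
      (∫⁻ θ in Ioo (0:ℝ) 1, ENNReal.ofReal (J θ ^ 2 * (1 - θ) ^ α * θ ^ β)) < ⊤ →
      (∀ θ ∈ Icc (0:ℝ) 1, E θ ≤ J θ + L * ∫ η in (0:ℝ)..θ, E η) →
      (∫⁻ θ in Ioo (0:ℝ) 1, ENNReal.ofReal (E θ ^ 2 * (1 - θ) ^ α * θ ^ β)) ^ ((1:ℝ)/2)
        ≤ ENNReal.ofReal C *
          (∫⁻ θ in Ioo (0:ℝ) 1, ENNReal.ofReal (J θ ^ 2 * (1 - θ) ^ α * θ ^ β)) ^ ((1:ℝ)/2) := by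
  set K1 : ℝ≥0∞ := ∫⁻ θ in Ioo (0:ℝ) 1, ENNReal.ofReal ((1-θ)^α * θ^β) with hK1def
  set K2 : ℝ≥0∞ := ∫⁻ θ in Ioo (0:ℝ) 1, ENNReal.ofReal ((1-θ)^(-α) * θ^(-β)) with hK2def
  have hK1 : K1 < ⊤ := lintegral_weight_lt_top hα.1 hβ.1
  have hK2 : K2 < ⊤ := lintegral_weight_lt_top (by linarith [hα.2]) (by linarith [hβ.2])
  set c' : ℝ := L * 3^(⌈2*L⌉₊) with hc'def
  have hc' : 0 < c' := by positivity
  set D : ℝ := 2 + 2*c'^2*K1.toReal*K2.toReal with hDdef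
  have hD : 0 < D := by positivity
  refine ⟨Real.sqrt D, Real.sqrt_pos.mpr hD, ?_⟩
  intro E J hE hE0 hJm hJ0 hSJ hEJ
  set SJ : ℝ≥0∞ := ∫⁻ θ in Ioo (0:ℝ) 1, ENNReal.ofReal (J θ ^ 2 * (1 - θ) ^ α * θ ^ β)
    with hSJdef
  have hHold : (∫⁻ θ in Ioo (0:ℝ) 1, ENNReal.ofReal (J θ)) ≤ SJ ^ ((1:ℝ)/2) * K2 ^ ((1:ℝ)/2) :=
    holder_J α β J hJm hJ0
  have hT : (∫⁻ θ in Ioo (0:ℝ) 1, ENNReal.ofReal (J θ)) < ⊤ := by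
    refine lt_of_le_of_lt hHold ?_
    exact ENNReal.mul_lt_top (ENNReal.rpow_lt_top_of_nonneg (by norm_num) hSJ.ne)
      (ENNReal.rpow_lt_top_of_nonneg (by norm_num) hK2.ne)
  have hJint : IntegrableOn J (Icc (0:ℝ) 1) := integrableOn_of_lintegral_lt_top hJm hJ0 hT
  have hGron := gronwall_primitive_bound E J L hL hE hE0 hJint hJ0 hEJ
  set B : ℝ := ∫ η in (0:ℝ)..1, J η with hBdef
  have hB0 : 0 ≤ B :=
    intervalIntegral.integral_nonneg (by norm_num) (fun u hu => hJ0 u hu)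
  have hofB : ENNReal.ofReal B ≤ SJ ^ ((1:ℝ)/2) * K2 ^ ((1:ℝ)/2) := by
    have h1 : B = ∫ θ in Ioc (0:ℝ) 1, J θ := intervalIntegral.integral_of_le (by norm_num)
    have hJioc : IntegrableOn J (Ioc (0:ℝ) 1) := hJint.mono_set Ioc_subset_Icc_self
    have h2 : ENNReal.ofReal B = ∫⁻ θ in Ioc (0:ℝ) 1, ENNReal.ofReal (J θ) := by
      rw [h1]
      exact ofReal_integral_eq_lintegral_ofReal hJioc
        ((ae_restrict_iff' measurableSet_Ioc).mpr
          (ae_of_all _ fun θ hθ => hJ0 θ ⟨hθ.1.le, hθ.2⟩))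
    rw [h2, ← Measure.restrict_congr_set Ioo_ae_eq_Ioc]
    exact hHold
  have hptE : ∀ θ ∈ Icc (0:ℝ) 1, E θ ≤ J θ + c' * B := by
    intro θ hθ
    have h1 := hEJ θ hθ
    have h2 := hGron θ hθ
    have h3 : L * (∫ η in (0:ℝ)..θ, E η) ≤ L * ((3:ℝ)^(⌈2*L⌉₊) * B) :=
      mul_le_mul_of_nonneg_left h2 hL.le
    have e : c' * B = L * ((3:ℝ)^(⌈2*L⌉₊) * B) := by rw [hc'def]; ring
    linarith
  have m1 : Measurable fun θ:ℝ => ENNReal.ofReal (J θ^2*(1-θ)^α*θ^β) :=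
    Measurable.ennreal_ofReal (by fun_prop)
  have m2 : Measurable fun θ:ℝ => ENNReal.ofReal ((1-θ)^α*θ^β) :=
    Measurable.ennreal_ofReal (by fun_prop)
  have main : (∫⁻ θ in Ioo (0:ℝ) 1, ENNReal.ofReal (E θ ^ 2 * (1 - θ) ^ α * θ ^ β))
      ≤ 2 * SJ + ENNReal.ofReal (2*(c'*B)^2) * K1 := by
    have step1 : (∫⁻ θ in Ioo (0:ℝ) 1, ENNReal.ofReal (E θ ^ 2 * (1 - θ) ^ α * θ ^ β))
        ≤ ∫⁻ θ in Ioo (0:ℝ) 1, (2 * ENNReal.ofReal (J θ ^ 2 * (1 - θ) ^ α * θ ^ β)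
          + ENNReal.ofReal (2*(c'*B)^2) * ENNReal.ofReal ((1-θ)^α * θ^β)) := by
      apply setLIntegral_mono' measurableSet_Ioo
      intro θ hθ
      have hu : (0:ℝ) < 1 - θ := by linarith [hθ.2]
      have hv : (0:ℝ) < θ := hθ.1
      have hθI : θ ∈ Icc (0:ℝ) 1 := ⟨hv.le, by linarith⟩
      have h1 := hptE θ hθI
      have h0 := hE0 θ hθI
      have hJθ := hJ0 θ hθI
      have hw : (0:ℝ) ≤ (1-θ)^α * θ^β := by positivity
      have hsq : E θ^2 ≤ 2*J θ^2 + 2*(c'*B)^2 := by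
        nlinarith [sq_nonneg (J θ - c'*B), mul_nonneg hc'.le hB0]
      calc ENNReal.ofReal (E θ ^ 2 * (1 - θ) ^ α * θ ^ β)
          ≤ ENNReal.ofReal (2*(J θ ^ 2 * (1 - θ) ^ α * θ ^ β)
              + (2*(c'*B)^2) * ((1-θ)^α * θ^β)) := by
            apply ENNReal.ofReal_le_ofReal
            have h2 : E θ^2 * ((1-θ)^α * θ^β) ≤ (2*J θ^2 + 2*(c'*B)^2) * ((1-θ)^α * θ^β) :=
              mul_le_mul_of_nonneg_right hsq hw
            nlinarith [h2]
        _ ≤ ENNReal.ofReal (2*(J θ ^ 2 * (1 - θ) ^ α * θ ^ β))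
            + ENNReal.ofReal ((2*(c'*B)^2) * ((1-θ)^α * θ^β)) := ENNReal.ofReal_add_le
        _ = 2 * ENNReal.ofReal (J θ ^ 2 * (1 - θ) ^ α * θ ^ β)
            + ENNReal.ofReal (2*(c'*B)^2) * ENNReal.ofReal ((1-θ)^α * θ^β) := by
            rw [ENNReal.ofReal_mul (by norm_num : (0:ℝ) ≤ 2),
              ENNReal.ofReal_mul (by positivity : (0:ℝ) ≤ 2*(c'*B)^2)]
            norm_num
    have step2 : (∫⁻ θ in Ioo (0:ℝ) 1, (2 * ENNReal.ofReal (J θ ^ 2 * (1 - θ) ^ α * θ ^ β)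
          + ENNReal.ofReal (2*(c'*B)^2) * ENNReal.ofReal ((1-θ)^α * θ^β)))
        = 2 * SJ + ENNReal.ofReal (2*(c'*B)^2) * K1 := by
      rw [lintegral_add_left (m1.const_mul 2), lintegral_const_mul 2 m1,
        lintegral_const_mul _ m2]
    exact step1.trans step2.le
  have hB2 : (ENNReal.ofReal B)^2 ≤ SJ * K2 := by
    have h := mul_le_mul' hofB hofB
    calc (ENNReal.ofReal B)^2 = ENNReal.ofReal B * ENNReal.ofReal B := sq _
      _ ≤ (SJ ^ ((1:ℝ)/2) * K2 ^ ((1:ℝ)/2)) * (SJ ^ ((1:ℝ)/2) * K2 ^ ((1:ℝ)/2)) := h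
      _ = (SJ ^ ((1:ℝ)/2) * SJ ^ ((1:ℝ)/2)) * (K2 ^ ((1:ℝ)/2) * K2 ^ ((1:ℝ)/2)) := by ring
      _ = SJ * K2 := by
          rw [← ENNReal.rpow_add_of_nonneg _ _ (by norm_num) (by norm_num),
            ← ENNReal.rpow_add_of_nonneg _ _ (by norm_num) (by norm_num)]
          norm_num
  have hbound2 : ENNReal.ofReal (2*(c'*B)^2) * K1
      ≤ ENNReal.ofReal (2*c'^2*K1.toReal*K2.toReal) * SJ := by
    have e1 : ENNReal.ofReal (2*(c'*B)^2) = ENNReal.ofReal (2*c'^2) * (ENNReal.ofReal B)^2 := by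
      rw [← ENNReal.ofReal_pow hB0, ← ENNReal.ofReal_mul (by positivity : (0:ℝ) ≤ 2*c'^2)]
      congr 1
      ring
    calc ENNReal.ofReal (2*(c'*B)^2) * K1
        = ENNReal.ofReal (2*c'^2) * (ENNReal.ofReal B)^2 * K1 := by rw [e1]
      _ ≤ ENNReal.ofReal (2*c'^2) * (SJ * K2) * K1 := by gcongr
      _ = (ENNReal.ofReal (2*c'^2) * K2 * K1) * SJ := by ring
      _ = ENNReal.ofReal (2*c'^2*K1.toReal*K2.toReal) * SJ := by
          rw [ENNReal.ofReal_mul (by positivity : (0:ℝ) ≤ 2*c'^2*K1.toReal),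
            ENNReal.ofReal_mul (by positivity : (0:ℝ) ≤ 2*c'^2),
            ENNReal.ofReal_toReal hK1.ne, ENNReal.ofReal_toReal hK2.ne]
          ring
  have final : (∫⁻ θ in Ioo (0:ℝ) 1, ENNReal.ofReal (E θ ^ 2 * (1 - θ) ^ α * θ ^ β))
      ≤ ENNReal.ofReal D * SJ := by
    calc (∫⁻ θ in Ioo (0:ℝ) 1, ENNReal.ofReal (E θ ^ 2 * (1 - θ) ^ α * θ ^ β))
        ≤ 2 * SJ + ENNReal.ofReal (2*(c'*B)^2) * K1 := main
      _ ≤ 2 * SJ + ENNReal.ofReal (2*c'^2*K1.toReal*K2.toReal) * SJ := by gcongr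
      _ = (2 + ENNReal.ofReal (2*c'^2*K1.toReal*K2.toReal)) * SJ := by ring
      _ = ENNReal.ofReal D * SJ := by
          rw [hDdef, ENNReal.ofReal_add (by norm_num) (by positivity)]
          norm_num
  calc (∫⁻ θ in Ioo (0:ℝ) 1, ENNReal.ofReal (E θ ^ 2 * (1 - θ) ^ α * θ ^ β)) ^ ((1:ℝ)/2)
      ≤ (ENNReal.ofReal D * SJ) ^ ((1:ℝ)/2) := ENNReal.rpow_le_rpow final (by norm_num)
    _ = (ENNReal.ofReal D) ^ ((1:ℝ)/2) * SJ ^ ((1:ℝ)/2) :=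
        ENNReal.mul_rpow_of_nonneg _ _ (by norm_num)
    _ = ENNReal.ofReal (Real.sqrt D) * SJ ^ ((1:ℝ)/2) := by
        rw [ENNReal.ofReal_rpow_of_pos hD, Real.sqrt_eq_rpow]
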